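/- Let f(x) = |x|^{3/2} on [−1,1] and α = 3/2. Then its Legendre coefficients c_n = (n+1/2) ∫_{−1}^1 f(x) P_n(x) dx satisfy: c_n = 0 for n odd; c_0 = 1/(α+1) = 2/5; and for even n ≥ 2, c_n = (2n+1) · [α(α−2)(α−4)⋯(α−n+2)] / [(α+1)(α+3)⋯(α+n+1)]. -/

import Mathlib

open MeasureTheory Real Finset

/-- The `n`-th Legendre polynomial, via the Rodrigues formula. -/
noncomputable def legendre (n : ℕ) : Polynomial ℝ :=
  (1 / (2 ^ n * n.factorial) : ℝ) • (Polynomial.derivative^[n] ((Polynomial.X ^ 2 - 1) ^ n))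

open Polynomial

noncomputable def uP (n : ℕ) : Polynomial ℝ := ((X : Polynomial ℝ)^2 - 1)^n

theorem itadd (p q : ℝ[X]) (k : ℕ) : derivative^[k] (p + q) = derivative^[k] p + derivative^[k] q := by
  induction k generalizing p q with
  | zero => rfl
  | succ k ih => simp [Function.iterate_succ_apply, derivative_add, ih]

theorem itstep (p : ℝ[X]) (k : ℕ) : derivative^[k] (derivative p) = derivative^[k+1] p :=
  (Function.iterate_succ_apply _ _ _).symm

theorem L1 (k : ℕ) (p : ℝ[X]) :
    derivative^[k+1] (X * p) = X * derivative^[k+1] p + ((k:ℝ[X])+1) * derivative^[k] p := by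
  induction k generalizing p with
  | zero => simp [derivative_mul]; ring
  | succ k ih =>
    have h1 : derivative^[k+1+1] (X * p) = derivative^[k+1] (derivative (X * p)) :=
      Function.iterate_succ_apply _ _ _
    have h2 : derivative (X * p) = X * derivative p + p := by
      rw [derivative_mul, derivative_X]; ring
    rw [h1, h2, itadd, ih, itstep, itstep]
    push_cast
    ring

theorem L2 (k : ℕ) (p : ℝ[X]) :
    derivative^[k+2] ((X^2-1) * p) = (X^2-1) * derivative^[k+2] p
      + (2*((k:ℝ[X])+2)) * (X * derivative^[k+1] p)
      + (((k:ℝ[X])+2)*((k:ℝ[X])+1)) * derivative^[k] p := by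
  induction k generalizing p with
  | zero =>
    show derivative (derivative ((X^2-1) * p)) = _
    simp [derivative_mul, map_ofNat]
    ring
  | succ k ih =>
    have h1 : derivative^[k+1+2] ((X^2-1) * p) = derivative^[k+2] (derivative ((X^2-1) * p)) :=
      Function.iterate_succ_apply _ _ _
    have h2 : derivative ((X^2-1) * p) = (X^2-1) * derivative p + 2 * (X * p) := by
      simp [derivative_mul, map_ofNat]; ring
    rw [h1, h2, itadd, ih]
    have h3 : derivative^[k+2] ((2:ℝ[X]) * (X * p)) = 2 * derivative^[k+2] (X * p) := by
      have : ((2:ℝ[X])) = C 2 := (map_ofNat C 2).symm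
      rw [this, iterate_derivative_C_mul]
    rw [h3, L1 (k+1) p, itstep, itstep, itstep]
    push_cast
    ring

theorem uderMul (n : ℕ) : derivative (uP (n+1)) = (2*((n:ℝ[X])+1)) * (X * uP n) := by
  rw [uP, uP, derivative_pow]
  push_cast
  simp [derivative_sub, derivative_one, map_ofNat]
  ring

theorem uMulSelf (n : ℕ) : uP (n+1) = (X^2-1) * uP n := by
  rw [uP, uP, pow_succ]; ring

theorem WR (j : ℕ) : ((X:ℝ[X])^2-1) * derivative^[j+2] (uP (j+1))
    = (((j:ℝ[X])+1)*((j:ℝ[X])+2)) * derivative^[j] (uP (j+1)) := by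
  induction j with
  | zero =>
    show ((X:ℝ[X])^2-1) * derivative (derivative (uP 1)) = _
    rw [uP]
    simp [derivative_sub, map_ofNat]
    ring
  | succ i _ =>
    -- base identity
    have base : ((X:ℝ[X])^2-1) * derivative (uP (i+2)) = (2*((i:ℝ[X])+2)) * (X * uP (i+2)) := by
      rw [uderMul (i+1), uMulSelf (i+1)]
      push_cast
      ring
    have h := congrArg (derivative^[i+2]) base
    -- LHS via L2 with k := i, p := derivative (uP (i+2))
    rw [L2 i (derivative (uP (i+2)))] at h
    rw [itstep, itstep, itstep] at h
    -- RHS : pull out the constant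
    have hc : derivative^[i+2] ((2*((i:ℝ[X])+2)) * (X * uP (i+2)))
        = (2*((i:ℝ[X])+2)) * derivative^[i+2] (X * uP (i+2)) := by
      have : (2*((i:ℝ[X])+2)) = C (2*((i:ℝ)+2)) := by push_cast; simp [C_add, map_ofNat]
      rw [this, iterate_derivative_C_mul]
    rw [hc, L1 (i+1) (uP (i+2))] at h
    push_cast at h ⊢
    linear_combination h

theorem W1 (n : ℕ) : derivative^[n+2] (uP (n+1))
    = (2*((n:ℝ[X])+1)) * (X * derivative^[n+1] (uP n) + ((n:ℝ[X])+1) * derivative^[n] (uP n)) := by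
  have h1 : derivative^[n+2] (uP (n+1)) = derivative^[n+1] (derivative (uP (n+1))) :=
    Function.iterate_succ_apply _ _ _
  rw [h1, uderMul n]
  have : (2*((n:ℝ[X])+1)) = C (2*((n:ℝ)+1)) := by push_cast; simp [C_add, map_ofNat]
  rw [this, iterate_derivative_C_mul, L1 n (uP n), ← this]

theorem W2 (n : ℕ) : derivative^[n+1] (uP (n+1))
    = 2 * ((X^2-1) * derivative^[n+1] (uP n)) + (2*((n:ℝ[X])+1)) * (X * derivative^[n] (uP n)) := by
  cases n with
  | zero =>
    show derivative (uP 1) = _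
    rw [uP, uP]
    simp [derivative_sub, map_ofNat]
    norm_num
  | succ j =>
    have h : derivative^[j+2] (uP (j+2)) = derivative^[j+2] ((X^2-1) * uP (j+1)) := by
      rw [← uMulSelf]
    rw [L2 j (uP (j+1))] at h
    have hr := WR j
    rw [h]
    push_cast
    linear_combination -hr

theorem fac_ne (n : ℕ) : ((2:ℝ)^n * n.factorial) ≠ 0 := by positivity

theorem eval_legendre (n : ℕ) (x : ℝ) :
    (legendre n).eval x = (1/(2^n * n.factorial)) * (derivative^[n] (uP n)).eval x := by
  simp [legendre, uP]

theorem eval_dlegendre (n : ℕ) (x : ℝ) :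
    (derivative (legendre n)).eval x = (1/(2^n * n.factorial)) * (derivative^[n+1] (uP n)).eval x := by
  rw [legendre, derivative_smul]
  rw [show derivative (derivative^[n] (((X:ℝ[X])^2-1)^n)) = derivative^[n+1] (((X:ℝ[X])^2-1)^n) from
    (Function.iterate_succ_apply' _ n _).symm]
  simp [uP]

theorem hA (n : ℕ) (x : ℝ) :
    (derivative (legendre (n+1))).eval x
      = x * (derivative (legendre n)).eval x + ((n:ℝ)+1) * (legendre n).eval x := by
  have h := congrArg (eval x) (W1 n)
  simp only [eval_mul, eval_add, eval_natCast, eval_X, eval_ofNat, eval_one] at h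
  rw [eval_dlegendre (n+1), eval_dlegendre n, eval_legendre n, h]
  have h2 := fac_ne n
  have h3 := fac_ne (n+1)
  field_simp
  push_cast [Nat.factorial_succ]
  ring

theorem hC (n : ℕ) (x : ℝ) :
    ((n:ℝ)+1) * (legendre (n+1)).eval x
      = (x^2-1) * (derivative (legendre n)).eval x + ((n:ℝ)+1) * (x * (legendre n).eval x) := by
  have h := congrArg (eval x) (W2 n)
  simp only [eval_mul, eval_add, eval_natCast, eval_X, eval_ofNat, eval_one, eval_sub, eval_pow] at h
  rw [eval_dlegendre n, eval_legendre n, eval_legendre (n+1), h]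
  have h2 := fac_ne n
  have h3 := fac_ne (n+1)
  field_simp
  push_cast [Nat.factorial_succ]
  ring

theorem hC' (n : ℕ) (x : ℝ) :
    (x^2-1) * (derivative (legendre (n+1))).eval x
      = ((n:ℝ)+1) * (x * (legendre (n+1)).eval x - (legendre n).eval x) := by
  linear_combination (norm := (push_cast; ring)) (x^2-1) * hA n x - x * hC n x

theorem hRec (n : ℕ) (x : ℝ) :
    ((n:ℝ)+2) * (legendre (n+2)).eval x
      = (2*(n:ℝ)+3) * (x * (legendre (n+1)).eval x) - ((n:ℝ)+1) * (legendre n).eval x := by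
  linear_combination (norm := (push_cast; ring)) hC (n+1) x + hC' n x

theorem hDiff (n : ℕ) (x : ℝ) :
    (derivative (legendre (n+2))).eval x - (derivative (legendre n)).eval x
      = (2*(n:ℝ)+3) * (legendre (n+1)).eval x := by
  linear_combination (norm := (push_cast; ring)) hA (n+1) x + x * hA n x - hC n x

theorem leg_zero : legendre 0 = 1 := by
  simp [legendre]

theorem leg_one : legendre 1 = X := by
  simp only [legendre, pow_one, Nat.factorial_one, Function.iterate_one]
  rw [derivative_sub, derivative_one, derivative_X_pow]
  norm_num
  rw [Polynomial.smul_eq_C_mul, ← mul_assoc, ← C_mul]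
  norm_num

theorem eval_one_leg (n : ℕ) : (legendre n).eval 1 = 1 := by
  induction n with
  | zero => simp [leg_zero]
  | succ k ih =>
    have h := hC k 1
    rw [ih] at h
    have hk : ((k:ℝ)+1) ≠ 0 := by positivity
    apply mul_left_cancel₀ hk
    rw [h]
    ring

theorem eval_neg_leg (n : ℕ) (x : ℝ) : (legendre n).eval (-x) = (-1)^n * (legendre n).eval x := by
  induction n using Nat.twoStepInduction generalizing x with
  | zero => simp [leg_zero]
  | one => simp [leg_one]
  | more k ihk ihk1 =>
    have h2 := hRec k x
    have h1 := hRec k (-x)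
    have hk : ((k:ℝ)+2) ≠ 0 := by positivity
    apply mul_left_cancel₀ hk
    rw [h1, ihk, ihk1]
    linear_combination (norm := (push_cast; ring)) (-((-1):ℝ)^k) * h2

noncomputable def SS (n : ℕ) : ℝ := ∫ x in (0:ℝ)..1, x ^ ((3:ℝ)/2) * (legendre n).eval x
noncomputable def TT (n : ℕ) : ℝ := ∫ x in (0:ℝ)..1, x ^ ((1:ℝ)/2) * (legendre n).eval x

theorem contRpow {β : ℝ} (hβ : 0 ≤ β) : Continuous fun x : ℝ => x ^ β :=
  continuous_iff_continuousAt.2 fun x => Real.continuousAt_rpow_const x β (Or.inr hβ)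

theorem contPoly (p : ℝ[X]) : Continuous fun x : ℝ => p.eval x := p.continuous_aeval

theorem intRP (β : ℝ) (hβ : 0 ≤ β) (p : ℝ[X]) :
    IntervalIntegrable (fun x => x ^ β * p.eval x) volume 0 1 :=
  ((contRpow hβ).mul (contPoly p)).intervalIntegrable _ _

theorem rpow_half_mul (x : ℝ) (hx : 0 ≤ x) : x ^ ((1:ℝ)/2) * x = x ^ ((3:ℝ)/2) := by
  have h := (Real.rpow_add' hx (by norm_num : (1:ℝ)/2 + 1 ≠ 0)).symm
  rw [Real.rpow_one] at h
  rw [h]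
  norm_num

theorem mem_uIcc01 {x : ℝ} (hx : x ∈ Set.uIcc (0:ℝ) 1) : 0 ≤ x ∧ x ≤ 1 := by
  rw [Set.uIcc_of_le (by norm_num : (0:ℝ) ≤ 1)] at hx
  exact ⟨hx.1, hx.2⟩

theorem ibp (p : ℝ[X]) :
    ∫ x in (0:ℝ)..1, x ^ ((3:ℝ)/2) * (derivative p).eval x
      = p.eval 1 - (3/2) * ∫ x in (0:ℝ)..1, x ^ ((1:ℝ)/2) * p.eval x := by
  have hu : ∀ x ∈ Set.uIcc (0:ℝ) 1, HasDerivAt (fun y : ℝ => y ^ ((3:ℝ)/2))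
      ((3:ℝ)/2 * x ^ ((1:ℝ)/2)) x := by
    intro x _
    have := Real.hasDerivAt_rpow_const (x := x) (p := (3:ℝ)/2) (Or.inr (by norm_num))
    convert this using 2
    norm_num
  have hv : ∀ x ∈ Set.uIcc (0:ℝ) 1, HasDerivAt (fun y : ℝ => p.eval y)
      ((derivative p).eval x) x := fun x _ => p.hasDerivAt x
  have hu' : IntervalIntegrable (fun x : ℝ => (3:ℝ)/2 * x ^ ((1:ℝ)/2)) volume 0 1 :=
    (continuous_const.mul (contRpow (by norm_num))).intervalIntegrable _ _
  have hv' : IntervalIntegrable (fun x : ℝ => (derivative p).eval x) volume 0 1 :=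
    (contPoly _).intervalIntegrable _ _
  have key := intervalIntegral.integral_mul_deriv_eq_deriv_mul hu hv hu' hv'
  rw [key]
  rw [Real.one_rpow, Real.zero_rpow (by norm_num : (3:ℝ)/2 ≠ 0)]
  have : (∫ x in (0:ℝ)..1, (3:ℝ)/2 * x ^ ((1:ℝ)/2) * p.eval x)
      = (3:ℝ)/2 * ∫ x in (0:ℝ)..1, x ^ ((1:ℝ)/2) * p.eval x := by
    rw [← intervalIntegral.integral_const_mul]
    congr 1
    funext x
    ring
  rw [this]
  ring

theorem TTcomb (a b : ℝ) (m k : ℕ) :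
    (∫ x in (0:ℝ)..1, x ^ ((1:ℝ)/2) * (a * (legendre m).eval x + b * (legendre k).eval x))
      = a * TT m + b * TT k := by
  have h1 : IntervalIntegrable (fun x : ℝ => a * (x ^ ((1:ℝ)/2) * (legendre m).eval x)) volume 0 1 :=
    (continuous_const.mul ((contRpow (by norm_num)).mul (contPoly _))).intervalIntegrable _ _
  have h2 : IntervalIntegrable (fun x : ℝ => b * (x ^ ((1:ℝ)/2) * (legendre k).eval x)) volume 0 1 :=
    (continuous_const.mul ((contRpow (by norm_num)).mul (contPoly _))).intervalIntegrable _ _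
  have : (fun x : ℝ => x ^ ((1:ℝ)/2) * (a * (legendre m).eval x + b * (legendre k).eval x))
      = fun x : ℝ => a * (x ^ ((1:ℝ)/2) * (legendre m).eval x)
        + b * (x ^ ((1:ℝ)/2) * (legendre k).eval x) := by
    funext x; ring
  rw [this, intervalIntegral.integral_add h1 h2,
    intervalIntegral.integral_const_mul, intervalIntegral.integral_const_mul, TT, TT]

theorem Eq1 (n : ℕ) : (2*(n:ℝ)+3) * SS (n+1) = -(3/2) * (TT (n+2) - TT n) := by
  have step1 : (2*(n:ℝ)+3) * SS (n+1)
      = ∫ x in (0:ℝ)..1, x ^ ((3:ℝ)/2) * (derivative (legendre (n+2) - legendre n)).eval x := by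
    rw [SS, ← intervalIntegral.integral_const_mul]
    congr 1
    funext x
    rw [derivative_sub, eval_sub]
    linear_combination (-(x ^ ((3:ℝ)/2))) * (hDiff n x)
  rw [step1, ibp]
  have e1 : (legendre (n+2) - legendre n).eval 1 = 0 := by
    rw [eval_sub, eval_one_leg, eval_one_leg]; ring
  rw [e1]
  have e2 : (∫ x in (0:ℝ)..1, x ^ ((1:ℝ)/2) * (legendre (n+2) - legendre n).eval x)
      = TT (n+2) - TT n := by
    calc (∫ x in (0:ℝ)..1, x ^ ((1:ℝ)/2) * (legendre (n+2) - legendre n).eval x)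
        = ∫ x in (0:ℝ)..1, x ^ ((1:ℝ)/2)
            * (1 * (legendre (n+2)).eval x + (-1) * (legendre n).eval x) := by
          congr 1; funext x; rw [eval_sub]; ring
      _ = 1 * TT (n+2) + (-1) * TT n := TTcomb 1 (-1) (n+2) n
      _ = TT (n+2) - TT n := by ring
  rw [e2]
  ring

theorem Eq2 (n : ℕ) : (2*(n:ℝ)+3) * SS (n+1) = ((n:ℝ)+2) * TT (n+2) + ((n:ℝ)+1) * TT n := by
  have step1 : (2*(n:ℝ)+3) * SS (n+1)
      = ∫ x in (0:ℝ)..1, x ^ ((1:ℝ)/2)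
          * (((n:ℝ)+2) * (legendre (n+2)).eval x + ((n:ℝ)+1) * (legendre n).eval x) := by
    rw [SS, ← intervalIntegral.integral_const_mul]
    apply intervalIntegral.integral_congr
    intro x hx
    obtain ⟨hx0, _⟩ := mem_uIcc01 hx
    have hxx := rpow_half_mul x hx0
    simp only
    linear_combination (-(x ^ ((1:ℝ)/2))) * hRec n x - (2*(n:ℝ)+3) * (legendre (n+1)).eval x * hxx
  rw [step1, TTcomb]

theorem Rel1 (n : ℕ) : 3 * ((2*(n:ℝ)+3) * TT n) = (2*(n:ℝ)+7) * ((2*(n:ℝ)+3) * SS (n+1)) := by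
  have h1 := Eq1 n
  have h2 := Eq2 n
  linear_combination (-2*((n:ℝ)+2)) * h1 + (-3) * h2

theorem Rel2 (n : ℕ) : 3 * ((2*(n:ℝ)+3) * TT (n+2)) = (1-2*(n:ℝ)) * ((2*(n:ℝ)+3) * SS (n+1)) := by
  have h1 := Eq1 n
  have h2 := Eq2 n
  linear_combination (2*((n:ℝ)+1)) * h1 + (-3) * h2

theorem T1S0 : TT 1 = SS 0 := by
  rw [TT, SS]
  apply intervalIntegral.integral_congr
  intro x hx
  obtain ⟨hx0, _⟩ := mem_uIcc01 hx
  simp only [leg_one, leg_zero, eval_X, eval_one, mul_one]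
  exact rpow_half_mul x hx0

theorem S0 : SS 0 = 2/5 := by
  rw [SS]
  have : (∫ x in (0:ℝ)..1, x ^ ((3:ℝ)/2) * (legendre 0).eval x)
      = ∫ x in (0:ℝ)..1, x ^ ((3:ℝ)/2) := by
    congr 1; funext x; rw [leg_zero]; simp
  rw [this, integral_rpow (Or.inl (by norm_num))]
  rw [Real.one_rpow, Real.zero_rpow (by norm_num : (3:ℝ)/2 + 1 ≠ 0)]
  norm_num

theorem SRec (m : ℕ) : (2*(m:ℝ)+9) * SS (m+2) = (3-2*(m:ℝ)) * SS m := by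
  cases m with
  | zero =>
    have h1 := Rel1 1
    have h2 := T1S0
    push_cast at h1 ⊢
    linarith
  | succ j =>
    have h1 := Rel1 (j+2)
    have h2 := Rel2 j
    have c1 : (2*((j:ℝ)+2)+3) ≠ 0 := by positivity
    have c2 : (2*(j:ℝ)+3) ≠ 0 := by positivity
    have e1 : 3 * TT (j+2) = (2*((j:ℝ)+2)+7) * SS (j+3) := by
      apply mul_left_cancel₀ c1
      push_cast at h1 ⊢
      linear_combination h1
    have e2 : 3 * TT (j+2) = (1-2*(j:ℝ)) * SS (j+1) := by
      apply mul_left_cancel₀ c2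
      push_cast at h2 ⊢
      linear_combination h2
    push_cast
    have : SS (j+1+2) = SS (j+3) := by norm_num
    rw [this]
    linear_combination e2 - e1

theorem Sform (j : ℕ) : SS (2*j)
    = (∏ k ∈ Finset.range j, ((3:ℝ)/2 - 2*k)) / (∏ k ∈ Finset.range (j+1), ((3:ℝ)/2 + 2*k + 1)) := by
  induction j with
  | zero =>
    rw [show 2*0 = 0 from rfl, S0]
    simp [Finset.prod_range_one]
    norm_num
  | succ j ih =>
    have hrec := SRec (2*j)
    have h2j : 2*(j+1) = 2*j+2 := by ring
    rw [h2j]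
    have hD : (0:ℝ) < ∏ k ∈ Finset.range (j+1), ((3:ℝ)/2 + 2*k + 1) :=
      Finset.prod_pos fun k _ => by positivity
    have hne : (2*(2*(j:ℝ))+9) ≠ 0 := by positivity
    have key : SS (2*j+2) = (3-2*(2*(j:ℝ))) / (2*(2*(j:ℝ))+9) * SS (2*j) := by
      field_simp
      push_cast at hrec
      linarith
    rw [key, ih,
      Finset.prod_range_succ (f := fun k : ℕ => (3:ℝ)/2 - 2*k) (n := j),
      Finset.prod_range_succ (f := fun k : ℕ => (3:ℝ)/2 + 2*k + 1) (n := j+1)]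
    push_cast
    rw [div_mul_div_comm, div_eq_div_iff]
    · ring
    · positivity
    · apply mul_ne_zero hD.ne'
      positivity

theorem contAbsPow (n : ℕ) : Continuous (fun x : ℝ => |x| ^ ((3:ℝ)/2) * (legendre n).eval x) :=
  ((contRpow (by norm_num)).comp continuous_abs).mul (contPoly _)

theorem split_int (n : ℕ) :
    (∫ x in (-1:ℝ)..1, |x| ^ ((3:ℝ)/2) * (legendre n).eval x) = (1 + (-1:ℝ)^n) * SS n := by
  set f : ℝ → ℝ := fun x => |x| ^ ((3:ℝ)/2) * (legendre n).eval x with hf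
  have hcont : Continuous f := contAbsPow n
  have h1 : IntervalIntegrable f volume (-1) 0 := hcont.intervalIntegrable _ _
  have h2 : IntervalIntegrable f volume 0 1 := hcont.intervalIntegrable _ _
  have hsplit : (∫ x in (-1:ℝ)..1, f x)
      = (∫ x in (-1:ℝ)..0, f x) + ∫ x in (0:ℝ)..1, f x :=
    (intervalIntegral.integral_add_adjacent_intervals h1 h2).symm
  have hneg : (∫ x in (-1:ℝ)..0, f x) = ∫ x in (0:ℝ)..1, f (-x) := by
    rw [intervalIntegral.integral_comp_neg f]
    norm_num
  have hodd : (∫ x in (0:ℝ)..1, f (-x)) = (-1:ℝ)^n * ∫ x in (0:ℝ)..1, f x := by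
    rw [← intervalIntegral.integral_const_mul]
    congr 1
    funext x
    rw [hf]
    simp only [abs_neg]
    rw [eval_neg_leg]
    ring
  have hS : (∫ x in (0:ℝ)..1, f x) = SS n := by
    rw [SS]
    apply intervalIntegral.integral_congr
    intro x hx
    obtain ⟨hx0, _⟩ := mem_uIcc01 hx
    rw [hf]
    simp only
    rw [abs_of_nonneg hx0]
  rw [hsplit, hneg, hodd, hS]
  ring

theorem legendre_coeffs_abs_rpow
    (α : ℝ) (hα : α = 3 / 2)
    (c : ℕ → ℝ)
    (hc : ∀ n, c n = (n + 1 / 2) *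
      ∫ x in (-1 : ℝ)..1, |x| ^ α * (legendre n).eval x) :
    (∀ n, Odd n → c n = 0) ∧
    c 0 = 1 / (α + 1) ∧
    (∀ n, Even n → 2 ≤ n →
      c n = (2 * n + 1) * (∏ k ∈ Finset.range (n / 2), (α - 2 * k)) /
        (∏ k ∈ Finset.range (n / 2 + 1), (α + 2 * k + 1))) := by
  subst hα
  have hc' : ∀ n, c n = ((n:ℝ) + 1/2) * ((1 + (-1:ℝ)^n) * SS n) := by
    intro n
    rw [hc n, split_int n]
  refine ⟨?_, ?_, ?_⟩
  · intro n hn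
    rw [hc' n, hn.neg_one_pow]
    ring
  · rw [hc' 0]
    norm_num [S0]
  · intro n hn _
    have h2 : 2 * (n / 2) = n := Nat.two_mul_div_two_of_even hn
    rw [hc' n, hn.neg_one_pow]
    have : SS n = SS (2 * (n/2)) := by rw [h2]
    rw [this, Sform (n/2)]
    ring
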